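/- Let (A_k)_{k∈ℕ} be an inverse sequence of topological abelian groups with continuous group homomorphisms p_{k+1} : A_{k+1} → A_k as bonding maps, where for each k the group A_k is topologically isomorphic to ℝ^{n_k} × 𝕋^{m_k} for some n_k, m_k ∈ ℕ. Then the inverse limit lim_k A_k, realized as the closed subgroup of ∏_k A_k consisting of all threads (x_k) with p_{k+1}(x_{k+1}) = x_k for all k, is connected. -/

import Mathlib

set_option synthInstance.maxHeartbeats 1000000
set_option maxHeartbeats 2000000
set_option linter.unusedVariables false
set_option linter.unreachableTactic false
set_option linter.unusedTactic false

open Set Filter Topology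

noncomputable section

namespace InvLimStmt15

instance : Fact ((0:ℝ) < 1) := ⟨zero_lt_one⟩



section Helpers

/-- A continuous additive monoid hom between real topological vector spaces is ℝ-homogeneous. -/
lemma cont_hom_real_smul {M N : Type*} [AddCommGroup M] [Module ℝ M] [TopologicalSpace M]
    [ContinuousSMul ℝ M] [AddCommGroup N] [Module ℝ N] [TopologicalSpace N]
    [ContinuousSMul ℝ N] [T2Space N] (f : M →+ N) (hf : Continuous f) (t : ℝ) (x : M) :
    f (t • x) = t • f x := by
  have h1 : Continuous (fun t : ℝ => f (t • x)) := hf.comp (continuous_id.smul continuous_const)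
  have h2 : Continuous (fun t : ℝ => t • f x) := continuous_id.smul continuous_const
  have := (Rat.denseRange_cast (𝕜 := ℝ)).equalizer h1 h2
    (funext fun q => map_ratCast_smul f ℝ ℝ q x)
  exact congrFun this t

/-- Choice of a thread through a sequence of nonempty sets linked by surjections. -/
lemma exists_seq_thread {α : ℕ → Type*} (E : ∀ k, Set (α k)) (f : ∀ k, α (k+1) → α k)
    (h0 : (E 0).Nonempty) (hs : ∀ k, ∀ x ∈ E k, ∃ y ∈ E (k+1), f k y = x) :
    ∃ w : ∀ k, α k, (∀ k, w k ∈ E k) ∧ ∀ k, f k (w (k+1)) = w k := by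
  let g : ∀ k, {x : α k // x ∈ E k} := fun k => Nat.rec
    ⟨h0.choose, h0.choose_spec⟩
    (fun k p => ⟨(hs k p.1 p.2).choose, (hs k p.1 p.2).choose_spec.1⟩) k
  refine ⟨fun k => (g k).1, fun k => (g k).2, fun k => ?_⟩
  exact (hs k (g k).1 (g k).2).choose_spec.2

end Helpers


section Chain
variable {α : ℕ → Type*} [∀ k, Zero (α k)]

/-- Extend a value at level `N` downward along the maps `L`, with junk `0` above `N`. -/
noncomputable def chain (L : ∀ k, α (k+1) → α k) (N : ℕ) (top : α N) : ∀ j, α j := fun j =>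
  if h : N ≤ j then (if h2 : j = N then cast (congrArg α h2.symm) top else 0)
  else L j (chain L N top (j+1))
termination_by j => N - j
decreasing_by omega

variable (L : ∀ k, α (k+1) → α k) (N : ℕ) (top : α N)

lemma chain_top : chain L N top N = top := by
  rw [chain]; simp

lemma chain_lt {j : ℕ} (h : j < N) : chain L N top j = L j (chain L N top (j+1)) := by
  rw [chain]; rw [dif_neg (by omega)]

lemma chain_gt {j : ℕ} (h : N < j) : chain L N top j = 0 := by
  rw [chain]; rw [dif_pos (by omega), dif_neg (by omega)]

end Chain

section NestedConn
variable {X : Type*} [TopologicalSpace X] [T2Space X]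

lemma isPreconnected_iInter_nested {K : ℕ → Set X} (hdec : ∀ N, K (N+1) ⊆ K N)
    (hcpt : ∀ N, IsCompact (K N)) (hconn : ∀ N, IsPreconnected (K N)) :
    IsPreconnected (⋂ N, K N) := by
  rw [isPreconnected_iff_subset_of_fully_disjoint_closed]
  · intro u v hu hv hcov hdisj
    have hT : ∀ N, ⋂ i, K i ⊆ K N := fun N => iInter_subset K N
    have hcl : IsClosed (⋂ i, K i) := isClosed_iInter fun N => (hcpt N).isClosed
    have hAcpt : IsCompact ((⋂ i, K i) ∩ u) :=
      ((hcpt 0).of_isClosed_subset hcl (hT 0)).inter_right hu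
    have hBcpt : IsCompact ((⋂ i, K i) ∩ v) :=
      ((hcpt 0).of_isClosed_subset hcl (hT 0)).inter_right hv
    rcases ((⋂ i, K i) ∩ u).eq_empty_or_nonempty with hA | hA
    · right
      intro x hx
      rcases hcov hx with h | h
      · have hmem : x ∈ ((⋂ i, K i) ∩ u) := ⟨hx, h⟩
        rw [hA] at hmem
        exact hmem.elim
      · exact h
    rcases ((⋂ i, K i) ∩ v).eq_empty_or_nonempty with hB | hB
    · left
      intro x hx
      rcases hcov hx with h | h
      · exact h
      · have hmem : x ∈ ((⋂ i, K i) ∩ v) := ⟨hx, h⟩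
        rw [hB] at hmem
        exact hmem.elim
    exfalso
    obtain ⟨U, V, hUo, hVo, hAU, hBV, hUV⟩ :=
      SeparatedNhds.of_isCompact_isCompact hAcpt hBcpt
        (Set.disjoint_left.2 fun x hx hx' => Set.disjoint_left.1 hdisj hx.2 hx'.2)
    have hempty : ¬ ∀ N, (K N \ (U ∪ V)).Nonempty := by
      intro hne
      have := IsCompact.nonempty_iInter_of_sequence_nonempty_isCompact_isClosed
        (fun N => K N \ (U ∪ V))
        (fun N => diff_subset_diff_left (hdec N)) hne
        ((hcpt 0).diff (hUo.union hVo))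
        (fun N => ((hcpt N).isClosed).sdiff (hUo.union hVo))
      obtain ⟨x, hx⟩ := this
      have hx1 : x ∈ ⋂ i, K i := mem_iInter.2 fun i => ((mem_iInter.1 hx) i).1
      have hx2 : x ∉ U ∪ V := ((mem_iInter.1 hx) 0).2
      rcases hcov hx1 with h | h
      · exact hx2 (Or.inl (hAU ⟨hx1, h⟩))
      · exact hx2 (Or.inr (hBV ⟨hx1, h⟩))
    push_neg at hempty
    obtain ⟨N, hN⟩ := hempty
    rw [diff_eq_empty] at hN
    have h1 : (K N ∩ U).Nonempty := hA.mono (fun x hx => ⟨hT N hx.1, hAU hx⟩)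
    have h2 : (K N ∩ V).Nonempty := hB.mono (fun x hx => ⟨hT N hx.1, hBV hx⟩)
    obtain ⟨x, hx⟩ := hconn N U V hUo hVo hN h1 h2
    exact Set.disjoint_left.1 hUV hx.2.1 hx.2.2
  · exact isClosed_iInter fun N => (hcpt N).isClosed

end NestedConn


lemma unitAddCircle_exists_rep (x : UnitAddCircle) :
    ∃ v : ℝ, (v : UnitAddCircle) = x ∧ |v| = ‖x‖ := by
  haveI : Fact ((0:ℝ) < 1) := ⟨zero_lt_one⟩
  set v : ℝ := ((AddCircle.equivIco 1 (-(1/2)) x : ℝ)) with hv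
  have hmem : v ∈ Ico (-(1/2) : ℝ) (-(1/2) + 1) := (AddCircle.equivIco 1 (-(1/2)) x).2
  have hcoe : (v : UnitAddCircle) = x := (AddCircle.equivIco 1 (-(1/2))).symm_apply_apply x
  have hround : round v = 0 := by
    rw [round_eq_zero_iff]
    constructor
    · exact hmem.1
    · have := hmem.2; norm_num at this ⊢; linarith
  refine ⟨v, hcoe, ?_⟩
  rw [← hcoe, AddCircle.norm_eq]
  simp [hround]


lemma circle_hom_eq_mul (c : ℝ →+ UnitAddCircle) (hc : Continuous c) :
    ∃ a : ℝ, ∀ t : ℝ, c t = ((a * t : ℝ) : UnitAddCircle) := by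
  -- find δ > 0 with ‖c t‖ < 1/4 for |t| ≤ δ
  have hc0 : (c : ℝ → UnitAddCircle) 0 = 0 := map_zero c
  have hcont : ContinuousAt c 0 := hc.continuousAt
  rw [Metric.continuousAt_iff] at hcont
  obtain ⟨δ', hδ'pos, hδ'⟩ := hcont (1/4) (by norm_num)
  set δ : ℝ := δ' / 2 with hδdef
  have hδpos : 0 < δ := by positivity
  have hsmall : ∀ t : ℝ, |t| ≤ δ → ‖c t‖ < 1/4 := by
    intro t ht
    have : dist t 0 < δ' := by
      rw [Real.dist_eq, sub_zero]
      calc |t| ≤ δ := ht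
      _ < δ' := by rw [hδdef]; linarith
    have := hδ' this
    rwa [hc0, dist_zero_right] at this
  -- representatives
  have hrep : ∀ k : ℕ, ∃ v : ℝ, (v : UnitAddCircle) = c (δ / 2^k) ∧ |v| = ‖c (δ / 2^k)‖ :=
    fun k => unitAddCircle_exists_rep _
  choose u hu1 hu2 using hrep
  have husmall : ∀ k, |u k| < 1/4 := by
    intro k
    rw [hu2]
    refine hsmall _ ?_
    rw [abs_of_pos (by positivity)]
    calc δ / 2^k ≤ δ / 1 := by
          apply div_le_div_of_nonneg_left hδpos.le one_pos
          exact one_le_pow₀ (by norm_num)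
    _ = δ := by ring
  -- doubling relation
  have hdouble : ∀ k, 2 * u (k+1) = u k := by
    intro k
    have h1 : ((2 * u (k+1) - u k : ℝ) : UnitAddCircle) = 0 := by
      have e1 : ((2 * u (k+1) : ℝ) : UnitAddCircle) = c (δ / 2^k) := by
        have : (2 : ℝ) * u (k+1) = u (k+1) + u (k+1) := by ring
        rw [this, AddCircle.coe_add, hu1]
        rw [← map_add]
        congr 1
        ring
      have : ((2 * u (k+1) - u k : ℝ) : UnitAddCircle)
          = ((2 * u (k+1) : ℝ) : UnitAddCircle) - ((u k : ℝ) : UnitAddCircle) := by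
        push_cast [AddCircle.coe_sub]
        ring_nf
      rw [this, e1, hu1, sub_self]
    rw [AddCircle.coe_eq_zero_iff] at h1
    obtain ⟨z, hz⟩ := h1
    have hzb : |(z : ℝ)| < 1 := by
      rw [zsmul_eq_mul, mul_one] at hz
      rw [hz]
      calc |2 * u (k+1) - u k| ≤ |2 * u (k+1)| + |u k| := abs_sub _ _
      _ < 1 := by
          have h1 := husmall (k+1); have h2 := husmall k
          rw [abs_mul]
          simp only [abs_two]
          linarith
    have hz0 : z = 0 := by
      by_contra h
      have : (1:ℝ) ≤ |(z:ℝ)| := by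
        rw [← Int.cast_abs]
        exact_mod_cast Int.one_le_abs (by omega)
      linarith
    rw [hz0] at hz
    simp at hz
    linarith [hz]
  -- u k = u 0 / 2^k
  have hupow : ∀ k, u k = u 0 / 2^k := by
    intro k
    induction k with
    | zero => simp
    | succ k ih =>
      have h2 : u (k+1) = u k / 2 := by linarith [hdouble k]
      rw [h2, ih, pow_succ]
      ring
  set a : ℝ := u 0 / δ with ha
  -- c on dyadic multiples of δ
  have hdyadic : ∀ (k : ℕ) (j : ℤ), c ((j : ℝ) * (δ / 2^k)) = ((a * ((j:ℝ) * (δ / 2^k)) : ℝ) : UnitAddCircle) := by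
    intro k j
    have h1 : ((j : ℝ) * (δ / 2^k)) = (j : ℤ) • (δ / 2^k) := by
      rw [zsmul_eq_mul]
    rw [h1, map_zsmul, ← hu1, ← AddCircle.coe_zsmul]
    congr 1
    rw [zsmul_eq_mul, hupow]
    rw [ha]
    field_simp
    have h2 : (2:ℝ)^k ≠ 0 := by positivity
    have h3 : u 0 * 2^k * ((j:ℝ) * (δ / 2^k)) = (j:ℝ) * u 0 * δ := by
      rw [mul_div_assoc', mul_div_assoc', div_eq_iff h2]
      ring
    rw [zsmul_eq_mul, h3, hδdef]
  -- general t by density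
  refine ⟨a, fun t => ?_⟩
  set s : ℕ → ℝ := fun k => (⌊t * 2^k / δ⌋ : ℝ) * (δ / 2^k) with hs
  have hsle : ∀ k, s k ≤ t := by
    intro k
    rw [hs]
    have h1 : (⌊t * 2^k / δ⌋ : ℝ) ≤ t * 2^k / δ := Int.floor_le _
    have hpos : (0:ℝ) < δ / 2^k := by positivity
    calc (⌊t * 2^k / δ⌋ : ℝ) * (δ / 2^k) ≤ (t * 2^k / δ) * (δ / 2^k) := by
          exact mul_le_mul_of_nonneg_right h1 hpos.le
    _ = t := by field_simp
  have hsge : ∀ k, t - δ / 2^k ≤ s k := by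
    intro k
    rw [hs]
    have h1 : t * 2^k / δ ≤ (⌊t * 2^k / δ⌋ : ℝ) + 1 := (Int.lt_floor_add_one _).le
    have hpos : (0:ℝ) < δ / 2^k := by positivity
    have := mul_le_mul_of_nonneg_right h1 hpos.le
    have he : (t * 2^k / δ) * (δ / 2^k) = t := by field_simp
    rw [he] at this
    nlinarith [this]
  have htend0 : Tendsto (fun k : ℕ => δ / 2^k) atTop (𝓝 0) := by
    have : (fun k : ℕ => δ / 2^k) = fun k => δ * (1/2 : ℝ)^k := by
      funext k; rw [div_pow, one_pow]; ring
    rw [this]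
    simpa using (tendsto_pow_atTop_nhds_zero_of_lt_one (by norm_num : (0:ℝ) ≤ 1/2) (by norm_num)).const_mul δ
  have htends : Tendsto s atTop (𝓝 t) := by
    refine tendsto_of_tendsto_of_tendsto_of_le_of_le ?_ tendsto_const_nhds hsge hsle
    have := tendsto_const_nhds (x := t) (f := atTop (α := ℕ)).sub htend0
    simpa using this
  have h1 : Tendsto (fun k => c (s k)) atTop (𝓝 (c t)) := (hc.continuousAt.tendsto.comp htends)
  have h2 : Tendsto (fun k => c (s k)) atTop (𝓝 (((a * t : ℝ) : UnitAddCircle))) := by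
    have he : ∀ k, c (s k) = ((a * s k : ℝ) : UnitAddCircle) := fun k => hdyadic k _
    simp only [he]
    have : Tendsto (fun k => a * s k) atTop (𝓝 (a * t)) := htends.const_mul a
    exact ((AddCircle.continuous_mk' 1).continuousAt.tendsto.comp this)
  exact tendsto_nhds_unique h1 h2



/-- The real part of the image of the compact torus under a continuous hom is trivial. -/
lemma compact_fst {a b c d : ℕ}
    (F : ((Fin a → ℝ) × (Fin b → UnitAddCircle)) →+ ((Fin c → ℝ) × (Fin d → UnitAddCircle)))
    (hF : Continuous F) (t : Fin b → UnitAddCircle) : (F (0, t)).1 = 0 := by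
  set g : (Fin b → UnitAddCircle) → (Fin c → ℝ) := fun s => (F (0, s)).1 with hg
  have hgc : Continuous g := by
    apply Continuous.fst
    exact hF.comp (Continuous.prodMk_right _)
  have hcpt : IsCompact (range g) := isCompact_range hgc
  obtain ⟨C, hC⟩ := hcpt.isBounded.exists_norm_le
  have hsm : ∀ j : ℕ, g (j • t) = j • g t := by
    intro j
    rw [hg]
    simp only
    have : ((0 : Fin a → ℝ), j • t) = j • ((0 : Fin a → ℝ), t) := by
      rw [Prod.smul_mk, smul_zero]
    rw [this, map_nsmul]
    rfl
  by_contra hne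
  have hpos : 0 < ‖g t‖ := by
    rw [norm_pos_iff]
    exact hne
  obtain ⟨j, hj⟩ := exists_nat_gt (C / ‖g t‖)
  have h1 : ‖g (j • t)‖ ≤ C := hC _ (mem_range_self _)
  rw [hsm, ← Nat.cast_smul_eq_nsmul ℝ, norm_smul] at h1
  simp only [Real.norm_natCast] at h1
  have : C / ‖g t‖ < (j:ℝ) := hj
  have h2 : C < (j:ℝ) * ‖g t‖ := by
    rw [div_lt_iff₀ hpos] at this
    linarith
  linarith

/-- Lift a continuous hom `ℝ^a × ℝ^b → 𝕋` to a continuous hom into `ℝ`. -/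
lemma pair_circle_lift {a b : ℕ} (φ : ((Fin a → ℝ) × (Fin b → ℝ)) →+ UnitAddCircle)
    (hφ : Continuous φ) :
    ∃ ψ : ((Fin a → ℝ) × (Fin b → ℝ)) →+ ℝ, Continuous ψ ∧
      ∀ w, ((ψ w : ℝ) : UnitAddCircle) = φ w := by
  have hsingle : ∀ {e : ℕ} (i : Fin e), Continuous (fun t : ℝ => Pi.single (M := fun _ => ℝ) i t) := by
    intro e i
    apply continuous_pi
    intro j
    simp only [Pi.single_apply]
    by_cases h : j = i
    · simpa [h] using continuous_id'
    · simpa [h] using continuous_const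
  -- axis homs, first factor
  have hax1 : ∀ i : Fin a, ∃ ca : ℝ, ∀ t : ℝ,
      φ (Pi.single i t, 0) = ((ca * t : ℝ) : UnitAddCircle) := by
    intro i
    refine circle_hom_eq_mul (AddMonoidHom.mk' (fun t => φ (Pi.single i t, 0)) ?_) ?_
    · intro x y
      show φ (Pi.single i (x+y), 0) = φ (Pi.single i x, 0) + φ (Pi.single i y, 0)
      rw [← map_add, Prod.mk_add_mk, add_zero, Pi.single_add]
    · exact hφ.comp (Continuous.prodMk (hsingle i) continuous_const)
  have hax2 : ∀ j : Fin b, ∃ cb : ℝ, ∀ t : ℝ,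
      φ (0, Pi.single j t) = ((cb * t : ℝ) : UnitAddCircle) := by
    intro j
    refine circle_hom_eq_mul (AddMonoidHom.mk' (fun t => φ (0, Pi.single j t)) ?_) ?_
    · intro x y
      show φ (0, Pi.single j (x+y)) = φ (0, Pi.single j x) + φ (0, Pi.single j y)
      rw [← map_add, Prod.mk_add_mk, add_zero, Pi.single_add]
    · exact hφ.comp (Continuous.prodMk continuous_const (hsingle j))
  choose ca hca using hax1
  choose cb hcb using hax2
  refine ⟨AddMonoidHom.mk'
      (fun w => (∑ i, ca i * w.1 i) + (∑ j, cb j * w.2 j)) ?_, ?_, ?_⟩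
  · intro x y
    simp only [Prod.fst_add, Prod.snd_add, Pi.add_apply, mul_add, Finset.sum_add_distrib]
    ring
  · apply Continuous.add
    · apply continuous_finset_sum
      intro i _
      exact continuous_const.mul ((continuous_apply i).comp continuous_fst)
    · apply continuous_finset_sum
      intro j _
      exact continuous_const.mul ((continuous_apply j).comp continuous_snd)
  · intro w
    simp only [AddMonoidHom.mk'_apply]
    set q := QuotientAddGroup.mk' (AddSubgroup.zmultiples (1:ℝ)) with hq
    have hqc : ∀ v : ℝ, (v : UnitAddCircle) = q v := fun v => rfl
    have hw : w = (w.1, 0) + (0, w.2) := by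
      rw [Prod.mk_add_mk, add_zero, zero_add]
    rw [hqc, map_add q, map_sum q, map_sum q]
    conv_rhs => rw [hw, map_add]
    congr 1
    · have h1 : (w.1, (0 : Fin b → ℝ)) = ∑ i, ((Pi.single i (w.1 i) : Fin a → ℝ), (0 : Fin b → ℝ)) := by
        refine Prod.ext ?_ ?_
        · rw [Prod.fst_sum]
          exact (Finset.univ_sum_single w.1).symm
        · rw [Prod.snd_sum]
          simp
      rw [h1, map_sum]
      refine Finset.sum_congr rfl fun i _ => ?_
      rw [← hqc, hca]
    · have h2 : ((0 : Fin a → ℝ), w.2) = ∑ j, ((0 : Fin a → ℝ), (Pi.single j (w.2 j) : Fin b → ℝ)) := by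
        refine Prod.ext ?_ ?_
        · rw [Prod.fst_sum]; simp
        · rw [Prod.snd_sum]
          exact (Finset.univ_sum_single w.2).symm
      rw [h2, map_sum]
      refine Finset.sum_congr rfl fun j _ => ?_
      rw [← hqc, hcb]

/-- Lift a continuous hom `ℝ^a × ℝ^b → ℝ^c × 𝕋^d` through the projection `ℝ^c × ℝ^d → ℝ^c × 𝕋^d`. -/
lemma exists_lambda {a b c d : ℕ}
    (F : ((Fin a → ℝ) × (Fin b → ℝ)) →+ ((Fin c → ℝ) × (Fin d → UnitAddCircle)))
    (hF : Continuous F) :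
    ∃ L : ((Fin a → ℝ) × (Fin b → ℝ)) →+ ((Fin c → ℝ) × (Fin d → ℝ)),
      Continuous L ∧
      ∀ w, (((L w).1, fun i => (((L w).2 i : ℝ) : UnitAddCircle)) :
        (Fin c → ℝ) × (Fin d → UnitAddCircle)) = F w := by
  have hφ : ∀ i : Fin d, ∃ ψ : ((Fin a → ℝ) × (Fin b → ℝ)) →+ ℝ, Continuous ψ ∧
      ∀ w, ((ψ w : ℝ) : UnitAddCircle) = (F w).2 i := by
    intro i
    exact pair_circle_lift ((Pi.evalAddMonoidHom _ i).comp ((AddMonoidHom.snd _ _).comp F))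
      (((continuous_apply i).comp (hF.snd)))
  choose ψ hψc hψ using hφ
  refine ⟨AddMonoidHom.mk' (fun w => ((F w).1, fun i => ψ i w)) ?_, ?_, ?_⟩
  · intro x y
    refine Prod.ext ?_ ?_
    · simp [Prod.fst_add]
    · funext i
      simp [map_add]
  · refine Continuous.prodMk hF.fst (continuous_pi fun i => hψc i)
  · intro w
    refine Prod.ext rfl ?_
    funext i
    exact hψ i w


section ML

variable {α : ℕ → Type} [∀ k, AddCommGroup (α k)] [∀ k, Module ℝ (α k)]
  [∀ k, FiniteDimensional ℝ (α k)]





/-- Mittag-Leffler--type lemma: an inverse sequence of nonempty affine subspaces of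
finite-dimensional real vector spaces has a thread. -/
lemma ml_exists (L : ∀ k, α (k+1) →ₗ[ℝ] α k) (F : ∀ k, Set (α k)) (W : ∀ k, Submodule ℝ (α k))
    (hFW1 : ∀ k, ∀ x ∈ F k, ∀ y ∈ F k, x - y ∈ W k)
    (hFW2 : ∀ k, ∀ x ∈ F k, ∀ u ∈ W k, x + u ∈ F k)
    (hFne : ∀ k, (F k).Nonempty)
    (hLF : ∀ k, ∀ x ∈ F (k+1), L k x ∈ F k)
    (hLW : ∀ k, ∀ u ∈ W (k+1), L k u ∈ W k) :
    ∃ w : ∀ k, α k, (∀ k, w k ∈ F k) ∧ ∀ k, L k (w (k+1)) = w k := by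
  classical
  -- partial-thread images
  set D : ∀ k, ℕ → Set (α k) := fun k d =>
    {x | ∃ w : ∀ j, α j, w k = x ∧ w (k+d) ∈ F (k+d) ∧
      ∀ j, k ≤ j → j < k+d → L j (w (j+1)) = w j} with hD
  set Mc : ∀ k, ℕ → Set (α k) := fun k d =>
    {x | ∃ w : ∀ j, α j, w k = x ∧ w (k+d) ∈ W (k+d) ∧
      ∀ j, k ≤ j → j < k+d → L j (w (j+1)) = w j} with hMc
  -- D k 0 = F k
  have hD0 : ∀ k, D k 0 = F k := by
    intro k
    ext x
    constructor
    · rintro ⟨w, rfl, hF0, -⟩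
      exact hF0
    · intro hx
      exact ⟨Function.update (fun j => 0) k x, Function.update_self _ _ _, by
        simpa [Function.update_self] using hx, fun j h1 h2 => absurd h2 (by omega)⟩
  -- nonempty
  have hDne : ∀ k d, (D k d).Nonempty := by
    intro k d
    obtain ⟨x, hx⟩ := hFne (k+d)
    set w := chain (fun j (y : α (j+1)) => L j y) (k+d) x with hw
    refine ⟨w k, w, rfl, ?_, ?_⟩
    · rw [hw, chain_top]; exact hx
    · intro j h1 h2
      rw [hw, chain_lt _ _ _ h2]
  -- single-step decrease
  have hDstep : ∀ k d, D k (d+1) ⊆ D k d := by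
    intro k d x
    rintro ⟨w, rfl, htop, hcond⟩
    refine ⟨w, rfl, ?_, fun j h1 h2 => hcond j h1 (by omega)⟩
    have h := hcond (k+d) (by omega) (by omega)
    rw [← h]
    exact hLF _ _ htop
  have hMstep : ∀ k d, Mc k (d+1) ⊆ Mc k d := by
    intro k d x
    rintro ⟨w, rfl, htop, hcond⟩
    refine ⟨w, rfl, ?_, fun j h1 h2 => hcond j h1 (by omega)⟩
    have h := hcond (k+d) (by omega) (by omega)
    rw [← h]
    exact hLW _ _ htop
  have hDanti : ∀ k d e, d ≤ e → D k e ⊆ D k d := by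
    intro k d e h
    induction e with
    | zero => have : d = 0 := by omega
              subst this; exact subset_rfl
    | succ e ih =>
      rcases Nat.eq_or_lt_of_le h with h1 | h1
      · subst h1; exact subset_rfl
      · exact (ih (by omega)).trans' (hDstep k e) |>.trans subset_rfl
  have hManti : ∀ k d e, d ≤ e → Mc k e ⊆ Mc k d := by
    intro k d e h
    induction e with
    | zero => have : d = 0 := by omega
              subst this; exact subset_rfl
    | succ e ih =>
      rcases Nat.eq_or_lt_of_le h with h1 | h1
      · subst h1; exact subset_rfl
      · exact (ih (by omega)).trans' (hMstep k e) |>.trans subset_rfl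
  -- Mc is a submodule
  set M : ∀ k, ℕ → Submodule ℝ (α k) := fun k d =>
    { carrier := Mc k d
      add_mem' := by
        rintro x y ⟨w, rfl, htop, hcond⟩ ⟨w', rfl, htop', hcond'⟩
        refine ⟨fun j => w j + w' j, rfl, (W _).add_mem htop htop', fun j h1 h2 => ?_⟩
        rw [map_add, hcond j h1 h2, hcond' j h1 h2]
      zero_mem' := ⟨fun j => 0, rfl, (W _).zero_mem, fun j h1 h2 => map_zero _⟩
      smul_mem' := by
        rintro t x ⟨w, rfl, htop, hcond⟩
        refine ⟨fun j => t • w j, rfl, (W _).smul_mem t htop, fun j h1 h2 => ?_⟩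
        rw [map_smul, hcond j h1 h2] } with hM
  -- difference and translation
  have hdiff : ∀ k d, ∀ x ∈ D k d, ∀ y ∈ D k d, x - y ∈ Mc k d := by
    rintro k d x ⟨w, rfl, htop, hcond⟩ y ⟨w', rfl, htop', hcond'⟩
    refine ⟨fun j => w j - w' j, rfl, hFW1 _ _ htop _ htop', fun j h1 h2 => ?_⟩
    rw [map_sub, hcond j h1 h2, hcond' j h1 h2]
  have htrans : ∀ k d, ∀ x ∈ D k d, ∀ u ∈ Mc k d, x + u ∈ D k d := by
    rintro k d x ⟨w, rfl, htop, hcond⟩ u ⟨w', rfl, htop', hcond'⟩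
    refine ⟨fun j => w j + w' j, rfl, hFW2 _ _ htop _ htop', fun j h1 h2 => ?_⟩
    rw [map_add, hcond j h1 h2, hcond' j h1 h2]
  -- peeling
  have hpeel : ∀ k d, D k (d+1) = (L k) '' (D (k+1) d) := by
    intro k d
    ext x
    constructor
    · rintro ⟨w, rfl, htop, hcond⟩
      refine ⟨w (k+1), ⟨w, rfl, ?_, fun j h1 h2 => hcond j (by omega) (by omega)⟩, ?_⟩
      · rw [show (k+1)+d = k+(d+1) by omega]
        exact htop
      · exact hcond k (le_refl k) (by omega)
    · rintro ⟨y, ⟨w, rfl, htop, hcond⟩, rfl⟩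
      refine ⟨Function.update w k (L k (w (k+1))), Function.update_self _ _ _, ?_, ?_⟩
      · rw [Function.update_of_ne (by omega)]
        rw [show k+(d+1) = (k+1)+d by omega]
        exact htop
      · intro j h1 h2
        rcases Nat.eq_or_lt_of_le h1 with h3 | h3
        · subst h3
          rw [Function.update_of_ne (by omega), Function.update_self]
        · rw [Function.update_of_ne (by omega), Function.update_of_ne (by omega)]
          exact hcond j (by omega) (by omega)
  -- stabilization of M k d
  have hstab : ∀ k, ∃ d0, ∀ d, d0 ≤ d → M k d = M k d0 := by
    intro k
    have hne : (Set.range fun d => Module.finrank ℝ (M k d)).Nonempty := ⟨_, ⟨0, rfl⟩⟩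
    obtain ⟨d0, hd0⟩ := Nat.sInf_mem hne
    refine ⟨d0, fun d hd => ?_⟩
    have hle : M k d ≤ M k d0 := hManti k d0 d hd
    refine Submodule.eq_of_le_of_finrank_le hle ?_
    exact hd0.trans_le (Nat.sInf_le ⟨d, rfl⟩)
  choose d0 hd0 using hstab
  -- stabilized sets
  set E : ∀ k, Set (α k) := fun k => D k (d0 k) with hE
  have hEstab : ∀ k d, d0 k ≤ d → D k d = E k := by
    intro k d hd
    apply Subset.antisymm (hDanti k (d0 k) d hd)
    intro a ha
    obtain ⟨b, hb⟩ := hDne k d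
    have h1 : a - b ∈ Mc k (d0 k) := hdiff k (d0 k) a ha b (hDanti k (d0 k) d hd hb)
    have h2 : a - b ∈ Mc k d := by
      have := hd0 k d hd
      have h3 : a - b ∈ M k (d0 k) := h1
      rw [← this] at h3
      exact h3
    have := htrans k d b hb (a-b) h2
    simpa using this
  have hEne : ∀ k, (E k).Nonempty := fun k => hDne k (d0 k)
  have hEF : ∀ k, E k ⊆ F k := by
    intro k
    rw [hE]
    intro x hx
    rw [← hD0 k]
    exact hDanti k 0 (d0 k) (by omega) hx
  have hEsurj : ∀ k, ∀ x ∈ E k, ∃ y ∈ E (k+1), L k y = x := by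
    intro k x hx
    set d := max (d0 k) (d0 (k+1)) with hd
    have h1 : E k = D k (d+1) := (hEstab k (d+1) (by omega)).symm
    have h2 : D (k+1) d = E (k+1) := hEstab (k+1) d (by omega)
    rw [h1, hpeel k d, h2] at hx
    obtain ⟨y, hy, hxy⟩ := hx
    exact ⟨y, hy, hxy⟩
  obtain ⟨w, hw1, hw2⟩ := exists_seq_thread E (fun k => L k) (hEne 0) hEsurj
  exact ⟨w, fun k => hEF k (hw1 k), hw2⟩

end ML





section KPart

variable (n m : ℕ → ℕ)
  (P : ∀ k, ((Fin (n (k+1)) → ℝ) × (Fin (m (k+1)) → UnitAddCircle)) →+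
    ((Fin (n k) → ℝ) × (Fin (m k) → UnitAddCircle)))

lemma K_preconnected (hP : ∀ k, Continuous (P k)) :
    IsPreconnected {x : ∀ k, (Fin (n k) → ℝ) × (Fin (m k) → UnitAddCircle) |
      (∀ k, (x k).1 = 0) ∧ ∀ k, P k (x (k+1)) = x k} := by
  classical
  set KN : ℕ → Set (∀ k, (Fin (n k) → ℝ) × (Fin (m k) → UnitAddCircle)) := fun N =>
    {x | (∀ k, (x k).1 = 0) ∧ ∀ j, j < N → P j (x (j+1)) = x j} with hKN
  have hEq : {x : ∀ k, (Fin (n k) → ℝ) × (Fin (m k) → UnitAddCircle) |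
      (∀ k, (x k).1 = 0) ∧ ∀ k, P k (x (k+1)) = x k} = ⋂ N, KN N := by
    ext x
    constructor
    · rintro ⟨h1, h2⟩
      exact mem_iInter.2 fun N => ⟨h1, fun j _ => h2 j⟩
    · intro h
      have h' := mem_iInter.1 h
      exact ⟨(h' 0).1, fun j => (h' (j+1)).2 j (by omega)⟩
  rw [hEq]
  have hPfst : ∀ k (b : (Fin (n (k+1)) → ℝ) × (Fin (m (k+1)) → UnitAddCircle)),
      b.1 = 0 → (P k b).1 = 0 := by
    intro k b hb
    have : b = (0, b.2) := Prod.ext hb rfl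
    rw [this]
    exact compact_fst (P k) (hP k) b.2
  apply isPreconnected_iInter_nested
  · intro N x hx
    exact ⟨hx.1, fun j hj => hx.2 j (by omega)⟩
  · -- compactness
    intro N
    have h1 : KN N = {x : ∀ k, (Fin (n k) → ℝ) × (Fin (m k) → UnitAddCircle) |
        ∀ k, (x k).1 = 0} ∩ ⋂ (j : ℕ), ⋂ (_ : j < N), {x | P j (x (j+1)) = x j} := by
      ext x
      simp only [hKN, mem_setOf_eq, mem_inter_iff, mem_iInter]
      try tauto
    rw [h1]
    apply IsCompact.inter_right
    · have h2 : {x : ∀ k, (Fin (n k) → ℝ) × (Fin (m k) → UnitAddCircle) | ∀ k, (x k).1 = 0}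
          = univ.pi (fun k => ({0} : Set (Fin (n k) → ℝ)) ×ˢ univ) := by
        ext x
        simp only [Set.mem_univ_pi, Set.mem_prod, mem_setOf_eq, mem_singleton_iff, mem_univ,
          and_true]
        try rfl
        try (constructor
             · intro h i
               exact ⟨(x i).2, Prod.ext (h i).symm rfl⟩
             · intro h k
               obtain ⟨y, hy⟩ := h k
               rw [← hy])
      rw [h2]
      exact isCompact_univ_pi fun k => isCompact_singleton.prod isCompact_univ
    · exact isClosed_iInter fun j => isClosed_iInter fun _ =>
        isClosed_eq ((hP j).comp (continuous_apply (j+1))) (continuous_apply j)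
  · -- connectedness
    intro N
    set σ : (∀ k, (Fin (n k) → ℝ) × (Fin (m k) → UnitAddCircle)) →
        (∀ k, (Fin (n k) → ℝ) × (Fin (m k) → UnitAddCircle)) := fun y j =>
      if N ≤ j then y j else chain (fun j b => P j b) N (y N) j with hσ
    have hchaincont : ∀ j, Continuous (fun b : (Fin (n N) → ℝ) × (Fin (m N) → UnitAddCircle) =>
        chain (fun j b => P j b) N b j) := by
      have key : ∀ d j, N - j ≤ d → Continuous
          (fun b : (Fin (n N) → ℝ) × (Fin (m N) → UnitAddCircle) =>
            chain (fun j b => P j b) N b j) := by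
        intro d
        induction d with
        | zero =>
          intro j hj
          rcases Nat.lt_or_ge N j with h | h
          · simp only [fun b => chain_gt (fun j b => P j b) N b h]
            exact continuous_const
          · have hj' : j = N := by omega
            subst hj'
            simp only [fun b => chain_top (fun j b => P j b) j b]
            exact continuous_id
        | succ d ih =>
          intro j hj
          rcases Nat.lt_or_ge j N with h | h
          · simp only [fun b => chain_lt (fun j b => P j b) N b h]
            exact (hP j).comp (ih (j+1) (by omega))
          · rcases Nat.lt_or_ge N j with h2 | h2
            · simp only [fun b => chain_gt (fun j b => P j b) N b h2]
              exact continuous_const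
            · have hj' : j = N := by omega
              subst hj'
              simp only [fun b => chain_top (fun j b => P j b) j b]
              exact continuous_id
      exact fun j => key (N - j) j (le_refl _)
    have hσcont : Continuous σ := by
      apply continuous_pi
      intro j
      rw [hσ]
      simp only
      split
      · exact continuous_apply j
      · exact (hchaincont j).comp (continuous_apply N)
    -- chain preserves fst = 0
    have hchainfst : ∀ (b : (Fin (n N) → ℝ) × (Fin (m N) → UnitAddCircle)), b.1 = 0 →
        ∀ j, (chain (fun j b => P j b) N b j).1 = 0 := by
      intro b hb
      have key : ∀ d j, N - j ≤ d → (chain (fun j b => P j b) N b j).1 = 0 := by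
        intro d
        induction d with
        | zero =>
          intro j hj
          rcases Nat.lt_or_ge N j with h | h
          · rw [chain_gt _ _ _ h]; rfl
          · have hj' : j = N := by omega
            subst hj'
            rw [chain_top]; exact hb
        | succ d ih =>
          intro j hj
          rcases Nat.lt_or_ge j N with h | h
          · rw [chain_lt _ _ _ h]
            exact hPfst j _ (ih (j+1) (by omega))
          · rcases Nat.lt_or_ge N j with h2 | h2
            · rw [chain_gt _ _ _ h2]; rfl
            · have hj' : j = N := by omega
              subst hj'
              rw [chain_top]; exact hb
      exact fun j => key (N - j) j (le_refl _)
    have hmem : ∀ y ∈ {x : ∀ k, (Fin (n k) → ℝ) × (Fin (m k) → UnitAddCircle) |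
        ∀ k, (x k).1 = 0}, σ y ∈ KN N := by
      intro y hy
      constructor
      · intro k
        rw [hσ]
        simp only
        split
        · exact hy k
        · exact hchainfst (y N) (hy N) k
      · intro j hj
        have hj1 : σ y j = chain (fun j b => P j b) N (y N) j := by
          rw [hσ]; simp only [if_neg (by omega : ¬ N ≤ j)]
        have hj2 : σ y (j+1) = chain (fun j b => P j b) N (y N) (j+1) := by
          rcases Nat.lt_or_ge (j+1) N with h | h
          · rw [hσ]; simp only [if_neg (by omega : ¬ N ≤ j+1)]
          · have : j + 1 = N := by omega
            subst this
            rw [hσ]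
            simp only [if_pos (le_refl _)]
            rw [chain_top]
        rw [hj1, hj2, chain_lt _ _ _ hj]
    have hfix : ∀ y ∈ KN N, σ y = y := by
      intro y hy
      funext j
      rcases Nat.lt_or_ge j N with h | h
      swap
      · rw [hσ]; simp only [if_pos h]
      · have key : ∀ d j, j ≤ N → N - j ≤ d → chain (fun j b => P j b) N (y N) j = y j := by
          intro d
          induction d with
          | zero =>
            intro j hj1 hj2
            have hj' : j = N := by omega
            subst hj'
            rw [chain_top]
          | succ d ih =>
            intro j hj1 hj2
            rcases Nat.lt_or_ge j N with h2 | h2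
            · rw [chain_lt _ _ _ h2, ih (j+1) (by omega) (by omega)]
              exact hy.2 j h2
            · have hj' : j = N := by omega
              subst hj'
              rw [chain_top]
        rw [hσ]
        simp only [if_neg (by omega : ¬ N ≤ j)]
        exact key (N - j) j (by omega) (le_refl _)
    have himg : KN N = σ '' {x : ∀ k, (Fin (n k) → ℝ) × (Fin (m k) → UnitAddCircle) |
        ∀ k, (x k).1 = 0} := by
      apply Subset.antisymm
      · intro x hx
        exact ⟨x, hx.1, hfix x hx⟩
      · rintro x ⟨y, hy, rfl⟩
        exact hmem y hy
    rw [himg]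
    apply IsPreconnected.image
    · have h2 : {x : ∀ k, (Fin (n k) → ℝ) × (Fin (m k) → UnitAddCircle) | ∀ k, (x k).1 = 0}
          = univ.pi (fun k => ({0} : Set (Fin (n k) → ℝ)) ×ˢ univ) := by
        ext x
        simp only [Set.mem_univ_pi, Set.mem_prod, mem_setOf_eq, mem_singleton_iff, mem_univ,
          and_true]
        try rfl
        try (constructor
             · intro h i
               exact ⟨(x i).2, Prod.ext (h i).symm rfl⟩
             · intro h k
               obtain ⟨y, hy⟩ := h k
               rw [← hy])
      rw [h2]
      apply isPreconnected_univ_pi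
      intro k
      exact isPreconnected_singleton.prod isPreconnected_univ
    · exact hσcont.continuousOn

end KPart





/-- Projection of the "Lie algebra" onto the group. -/
noncomputable def prHom (a b : ℕ) : ((Fin a → ℝ) × (Fin b → ℝ)) →+ ((Fin a → ℝ) × (Fin b → UnitAddCircle)) :=
  AddMonoidHom.mk' (fun w => (w.1, fun i => ((w.2 i : ℝ) : UnitAddCircle))) (by
    intro x y
    refine Prod.ext rfl ?_
    funext i
    exact AddCircle.coe_add (p := (1:ℝ)) _ _)

lemma prHom_continuous (a b : ℕ) : Continuous (prHom a b) := by
  apply Continuous.prodMk continuous_fst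
  exact continuous_pi fun i => (AddCircle.continuous_mk' 1).comp
    ((continuous_apply i).comp continuous_snd)

theorem concrete_main (n m : ℕ → ℕ)
    (P : ∀ k, ((Fin (n (k+1)) → ℝ) × (Fin (m (k+1)) → UnitAddCircle)) →+
      ((Fin (n k) → ℝ) × (Fin (m k) → UnitAddCircle)))
    (hP : ∀ k, Continuous (P k)) :
    IsConnected {x : ∀ k, (Fin (n k) → ℝ) × (Fin (m k) → UnitAddCircle) |
      ∀ k, P k (x (k+1)) = x k} := by
  classical
  constructor
  · exact ⟨0, fun k => by simp⟩
  apply isPreconnected_of_forall (0 : ∀ k, (Fin (n k) → ℝ) × (Fin (m k) → UnitAddCircle))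
  intro s hs
  simp only [mem_setOf_eq] at hs
  -- fst-triviality of bonding maps
  have hPfst : ∀ k (b : (Fin (n (k+1)) → ℝ) × (Fin (m (k+1)) → UnitAddCircle)),
      b.1 = 0 → (P k b).1 = 0 := by
    intro k b hb
    have : b = (0, b.2) := Prod.ext hb rfl
    rw [this]
    exact compact_fst (P k) (hP k) b.2
  -- lifted bonding maps
  have hLam : ∀ k, ∃ L : ((Fin (n (k+1)) → ℝ) × (Fin (m (k+1)) → ℝ)) →+
      ((Fin (n k) → ℝ) × (Fin (m k) → ℝ)), Continuous L ∧
      ∀ w, (((L w).1, fun i => (((L w).2 i : ℝ) : UnitAddCircle)) :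
        (Fin (n k) → ℝ) × (Fin (m k) → UnitAddCircle)) = P k (prHom _ _ w) := by
    intro k
    exact exists_lambda ((P k).comp (prHom (n (k+1)) (m (k+1))))
      ((hP k).comp (prHom_continuous _ _))
  choose L hLc hLp using hLam
  have hLsmul : ∀ k (t : ℝ) w, L k (t • w) = t • L k w :=
    fun k => cont_hom_real_smul (L k) (hLc k)
  set Llin : ∀ k, ((Fin (n (k+1)) → ℝ) × (Fin (m (k+1)) → ℝ)) →ₗ[ℝ]
      ((Fin (n k) → ℝ) × (Fin (m k) → ℝ)) := fun k =>
    { toFun := L k, map_add' := map_add (L k), map_smul' := fun t x => hLsmul k t x } with hLlin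
  -- fst of L
  have hLfst : ∀ k w, (L k w).1 = (P k (prHom _ _ w)).1 :=
    fun k w => congrArg Prod.fst (hLp k w)
  -- the Mittag-Leffler system
  set F : ∀ k, Set ((Fin (n k) → ℝ) × (Fin (m k) → ℝ)) := fun k => {w | w.1 = (s k).1} with hF
  set W : ∀ k, Submodule ℝ ((Fin (n k) → ℝ) × (Fin (m k) → ℝ)) := fun k =>
    LinearMap.ker (LinearMap.fst ℝ (Fin (n k) → ℝ) (Fin (m k) → ℝ)) with hW
  have hmemW : ∀ k (w : (Fin (n k) → ℝ) × (Fin (m k) → ℝ)), w ∈ W k ↔ w.1 = 0 := by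
    intro k w
    rw [hW]
    simp [LinearMap.mem_ker]
  obtain ⟨w, hwF, hwL⟩ := ml_exists Llin F W
    (by
      intro k x hx y hy
      rw [hmemW]
      rw [hF] at hx hy
      simp only [mem_setOf_eq] at hx hy
      show x.1 - y.1 = 0
      rw [hx, hy, sub_self])
    (by
      intro k x hx u hu
      rw [hmemW] at hu
      rw [hF] at hx ⊢
      simp only [mem_setOf_eq] at hx ⊢
      show x.1 + u.1 = (s k).1
      rw [hx, hu, add_zero])
    (fun k => ⟨((s k).1, 0), rfl⟩)
    (by
      intro k x hx
      rw [hF] at hx ⊢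
      simp only [mem_setOf_eq] at hx ⊢
      show (L k x).1 = (s k).1
      rw [hLfst k x]
      have hd : (prHom (n (k+1)) (m (k+1)) x - s (k+1)).1 = 0 := by
        show (prHom _ _ x).1 - (s (k+1)).1 = 0
        show x.1 - (s (k+1)).1 = 0
        rw [hx, sub_self]
      have hsplit : prHom (n (k+1)) (m (k+1)) x
          = s (k+1) + (prHom (n (k+1)) (m (k+1)) x - s (k+1)) := by abel
      rw [hsplit, map_add]
      show (P k (s (k+1))).1 + (P k _).1 = (s k).1
      rw [hPfst k _ hd, hs k, add_zero])
    (by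
      intro k u hu
      rw [hmemW] at hu
      rw [hmemW]
      show (L k u).1 = 0
      rw [hLfst k u]
      apply hPfst
      show u.1 = 0
      exact hu)
  -- one-parameter family through s (mod the compact part)
  set γ : ℝ → ∀ k, (Fin (n k) → ℝ) × (Fin (m k) → UnitAddCircle) :=
    fun t k => prHom _ _ (t • w k) with hγ
  have hγmem : ∀ t k, P k (γ t (k+1)) = γ t k := by
    intro t k
    rw [hγ]
    simp only
    have hwL' : L k (w (k+1)) = w k := hwL k
    rw [← hLp k (t • w (k+1)), hLsmul k t, hwL']
    rfl
  have hγcont : Continuous γ := by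
    apply continuous_pi
    intro k
    exact (prHom_continuous _ _).comp (continuous_id.smul continuous_const)
  have hγ0 : γ 0 = 0 := by
    funext k
    rw [hγ]
    simp only [zero_smul, map_zero]
    rfl
  -- the compact part
  set K : Set (∀ k, (Fin (n k) → ℝ) × (Fin (m k) → UnitAddCircle)) :=
    {x | (∀ k, (x k).1 = 0) ∧ ∀ k, P k (x (k+1)) = x k} with hK
  have hK0 : (0 : ∀ k, (Fin (n k) → ℝ) × (Fin (m k) → UnitAddCircle)) ∈ K :=
    ⟨fun k => rfl, fun k => map_zero _⟩
  have hsγ : s - γ 1 ∈ K := by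
    constructor
    · intro k
      show (s k - γ 1 k).1 = 0
      have h1 : (γ 1 k).1 = (w k).1 := by
        rw [hγ]
        show ((1:ℝ) • w k).1 = (w k).1
        rw [one_smul]
      show (s k).1 - (γ 1 k).1 = 0
      rw [h1, hwF k, sub_self]
    · intro k
      show P k ((s - γ 1) (k+1)) = (s - γ 1) k
      have : (s - γ 1) (k+1) = s (k+1) - γ 1 (k+1) := rfl
      rw [this, map_sub, hs k, hγmem 1 k]
      rfl
  -- assemble the connected set
  refine ⟨(γ '' univ) ∪ ((fun z => γ 1 + z) '' K), ?_, ?_, ?_, ?_⟩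
  · rintro z (⟨t, -, rfl⟩ | ⟨y, hy, rfl⟩)
    · exact fun k => hγmem t k
    · intro k
      show P k ((γ 1 + y) (k+1)) = (γ 1 + y) k
      have : (γ 1 + y) (k+1) = γ 1 (k+1) + y (k+1) := rfl
      rw [this, map_add, hγmem 1 k, hy.2 k]
      rfl
  · exact Or.inl ⟨0, mem_univ _, hγ0⟩
  · refine Or.inr ⟨s - γ 1, hsγ, ?_⟩
    show γ 1 + (s - γ 1) = s
    rw [add_comm, sub_add_cancel]
  · apply IsPreconnected.union (γ 1)
    · exact ⟨1, mem_univ _, rfl⟩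
    · exact ⟨0, hK0, by show γ 1 + 0 = γ 1; rw [add_zero]⟩
    · exact isPreconnected_univ.image γ hγcont.continuousOn
    · exact (K_preconnected n m P hP).image _
        (continuous_const.add continuous_id).continuousOn


end InvLimStmt15

end

/-- Let `(A k)_{k ∈ ℕ}` be an inverse sequence of topological abelian groups
with continuous group homomorphisms `p k : A (k+1) → A k` as bonding maps, where each `A k` is
topologically isomorphic to `ℝ^{n_k} × 𝕋^{m_k}` for some `n_k, m_k ∈ ℕ`. Then the inverse
limit `lim_k A k`, realized as the closed subgroup of `∏ k, A k` consisting of all threads,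
is connected. -/
theorem inverse_limit_of_connected_lie_groups_is_connected
    (A : ℕ → Type) [∀ k, AddCommGroup (A k)] [∀ k, TopologicalSpace (A k)]
    [∀ k, IsTopologicalAddGroup (A k)]
    (hA : ∀ k, ∃ (n m : ℕ) (e : A k ≃+ ((Fin n → ℝ) × (Fin m → UnitAddCircle))),
      Continuous e ∧ Continuous e.symm)
    (p : ∀ k, A (k + 1) →+ A k) (hp : ∀ k, Continuous (p k)) :
    IsConnected {x : ∀ k, A k | ∀ k, p k (x (k + 1)) = x k} := by
  classical
  choose n m e he1 he2 using hA
  set P : ∀ k, ((Fin (n (k+1)) → ℝ) × (Fin (m (k+1)) → UnitAddCircle)) →+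
      ((Fin (n k) → ℝ) × (Fin (m k) → UnitAddCircle)) := fun k =>
    ((e k).toAddMonoidHom.comp ((p k).comp (e (k+1)).symm.toAddMonoidHom)) with hPdef
  have hP : ∀ k, Continuous (P k) := fun k =>
    (he1 k).comp ((hp k).comp (he2 (k+1)))
  have hcon := InvLimStmt15.concrete_main n m P hP
  set Φ : (∀ k, (Fin (n k) → ℝ) × (Fin (m k) → UnitAddCircle)) → (∀ k, A k) :=
    fun y k => (e k).symm (y k) with hΦ
  have hΦcont : Continuous Φ :=
    continuous_pi fun k => (he2 k).comp (continuous_apply k)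
  have himg : Φ '' {x : ∀ k, (Fin (n k) → ℝ) × (Fin (m k) → UnitAddCircle) |
      ∀ k, P k (x (k+1)) = x k} = {x : ∀ k, A k | ∀ k, p k (x (k + 1)) = x k} := by
    apply Subset.antisymm
    · rintro x ⟨y, hy, rfl⟩
      intro k
      have h1 := hy k
      rw [hPdef] at h1
      simp only [AddMonoidHom.comp_apply, AddEquiv.coe_toAddMonoidHom] at h1
      have h2 := congrArg (e k).symm h1
      rw [AddEquiv.symm_apply_apply] at h2
      exact h2
    · intro x hx
      refine ⟨fun k => e k (x k), ?_, ?_⟩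
      · intro k
        rw [hPdef]
        simp only [AddMonoidHom.comp_apply, AddEquiv.coe_toAddMonoidHom]
        rw [AddEquiv.symm_apply_apply]
        rw [hx k]
      · funext k
        rw [hΦ]
        simp only
        rw [AddEquiv.symm_apply_apply]
  rw [← himg]
  exact hcon.image Φ hΦcont.continuousOn
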